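/- With ω², v, α(ω) as above, the ω²-eigenmode of K_n (normalized to unit sup-norm) is localised at an edge if and only if |α(ω)| ≠ 1: if |α(ω)| < 1 the last entry of the normalized eigenvector tends to 0 as n → ∞, and if |α(ω)| > 1 the first entry tends to 0 as n → ∞. -/
import Mathlib


open Filter

/-- The stiffness matrix `K_n` of the mass-spring chain with `n` repeated unit cells. -/
noncomputable def Kmat (N : ℕ) (d : ℕ → ℝ) (n : ℕ) :
    Matrix (Fin (n * N - 1)) (Fin (n * N - 1)) ℝ :=
  fun i j =>
    if (i : ℕ) = (j : ℕ) then 1 / d ((i : ℕ) % N) + 1 / d (((i : ℕ) + 1) % N)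
    else if (i : ℕ) + 1 = (j : ℕ) then -(1 / d (((i : ℕ) + 1) % N))
    else if (j : ℕ) + 1 = (i : ℕ) then -(1 / d (((j : ℕ) + 1) % N))
    else 0

/-- With `ω² ∈ σ(K)`, eigenvector `v` (`v_1 ≠ 0`, `v_0 = 0` by convention) and
`α(ω) = -(d_0/d_{N-1}) v_{N-1}/v_1`, the `ω²`-eigenmode of `K_n` normalised by
`k_1 = 1/max{1,|α|^{n-1}}`, namely `w_n = k_1 (v, 0, α v, …, α^{n-1} v)`, is localised at
an edge if and only if `|α(ω)| ≠ 1`: if `|α| < 1` its last entry tends to `0` as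
`n → ∞`, and if `|α| > 1` its first entry tends to `0` as `n → ∞`. -/
theorem mode_localised_iff_alpha_ne_one
    (N : ℕ) (hN : 2 ≤ N) (d : ℕ → ℝ) (hd : ∀ i, 0 < d i)
    (μ : ℝ) (v : ℕ → ℝ) (hv0 : v 0 = 0) (hv1 : v 1 ≠ 0)
    (heig : (Kmat N d 1).mulVec (fun i => v ((i : ℕ) + 1)) =
      μ • fun i : Fin (1 * N - 1) => v ((i : ℕ) + 1))
    (α : ℝ) (hα : α = -(d 0 / d (N - 1)) * (v (N - 1) / v 1))
    (w : ∀ n : ℕ, Fin (n * N - 1) → ℝ)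
    (hw : ∀ n : ℕ, ∀ i : Fin (n * N - 1),
      w n i = (1 / max 1 (|α| ^ (n - 1))) * (α ^ (((i : ℕ) + 1) / N) * v (((i : ℕ) + 1) % N)))
    (firstEntry lastEntry : ℕ → ℝ)
    (hfirst : ∀ n : ℕ, firstEntry n = if h : 0 < n * N - 1 then w n ⟨0, h⟩ else 0)
    (hlast : ∀ n : ℕ, lastEntry n =
      if h : 0 < n * N - 1 then w n ⟨n * N - 2, by omega⟩ else 0) :
    (|α| < 1 → Tendsto lastEntry atTop (nhds 0)) ∧
    (1 < |α| → Tendsto firstEntry atTop (nhds 0)) ∧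
    (|α| ≠ 1 ↔ (Tendsto firstEntry atTop (nhds 0) ∨ Tendsto lastEntry atTop (nhds 0))) := by

  have hN1 : 1 ≤ N := by omega
  have hfirst' : ∀ n, 1 ≤ n → firstEntry n = (1 / max 1 (|α| ^ (n - 1))) * v 1 := by
    intro n hn
    have hNn : N ≤ n * N := Nat.le_mul_of_pos_left N (by omega)
    have hpos : 0 < n * N - 1 := by omega
    rw [hfirst n, dif_pos hpos, hw]
    simp only
    rw [Nat.div_eq_of_lt (by omega), Nat.mod_eq_of_lt (by omega), pow_zero, one_mul]
  have hlast' : ∀ n, 1 ≤ n →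
      lastEntry n = (1 / max 1 (|α| ^ (n - 1))) * (α ^ (n - 1) * v (N - 1)) := by
    intro n hn
    have hNn : N ≤ n * N := Nat.le_mul_of_pos_left N (by omega)
    have hpos : 0 < n * N - 1 := by omega
    rw [hlast n, dif_pos hpos, hw]
    simp only
    have h1 : n * N - 2 + 1 = n * N - 1 := by omega
    rw [h1]
    obtain ⟨m, rfl⟩ : ∃ m, n = m + 1 := ⟨n - 1, by omega⟩
    have h2 : (m + 1) * N - 1 = N - 1 + m * N := by
      have : (m + 1) * N = m * N + N := by ring
      omega
    rw [h2, Nat.add_mul_div_right _ _ (by omega : 0 < N),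
        Nat.add_mul_mod_self_right, Nat.div_eq_of_lt (by omega),
        Nat.mod_eq_of_lt (by omega)]
    simp
  have part1 : |α| < 1 → Tendsto lastEntry atTop (nhds 0) := by
    intro hlt
    have heq : ∀ᶠ n in atTop, α ^ (n - 1) * v (N - 1) = lastEntry n := by
      filter_upwards [eventually_ge_atTop 1] with n hn
      rw [hlast' n hn]
      have hle : |α| ^ (n - 1) ≤ 1 := pow_le_one₀ (abs_nonneg α) hlt.le
      rw [max_eq_left hle]
      ring
    have ht : Tendsto (fun n => α ^ (n - 1) * v (N - 1)) atTop (nhds (0 * v (N - 1))) :=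
      Tendsto.mul_const _
        ((tendsto_pow_atTop_nhds_zero_of_abs_lt_one hlt).comp (tendsto_sub_atTop_nat 1))
    rw [zero_mul] at ht
    exact ht.congr' heq
  have part2 : 1 < |α| → Tendsto firstEntry atTop (nhds 0) := by
    intro hgt
    have h0 : (0 : ℝ) < |α| := lt_trans one_pos hgt
    have heq : ∀ᶠ n in atTop, (|α|⁻¹) ^ (n - 1) * v 1 = firstEntry n := by
      filter_upwards [eventually_ge_atTop 1] with n hn
      rw [hfirst' n hn]
      have h1 : (1 : ℝ) ≤ |α| ^ (n - 1) := one_le_pow₀ hgt.le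
      rw [max_eq_right h1, one_div, inv_pow]
    have habs : |(|α|)⁻¹| < 1 := by
      rw [abs_of_nonneg (inv_nonneg.mpr h0.le)]
      exact inv_lt_one_of_one_lt₀ hgt
    have ht : Tendsto (fun n => (|α|⁻¹) ^ (n - 1) * v 1) atTop (nhds (0 * v 1)) :=
      Tendsto.mul_const _
        ((tendsto_pow_atTop_nhds_zero_of_abs_lt_one habs).comp (tendsto_sub_atTop_nat 1))
    rw [zero_mul] at ht
    exact ht.congr' heq
  refine ⟨part1, part2, ?_, ?_⟩
  · intro hne
    rcases hne.lt_or_gt with h | h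
    · exact Or.inr (part1 h)
    · exact Or.inl (part2 h)
  · rintro (h | h) hone
    · have hconst : Tendsto firstEntry atTop (nhds (v 1)) := by
        apply tendsto_const_nhds.congr'
        filter_upwards [eventually_ge_atTop 1] with n hn
        rw [hfirst' n hn, hone, one_pow, max_self, div_self (one_ne_zero), one_mul]
      exact hv1 (tendsto_nhds_unique hconst h)
    · have hvN : v (N - 1) ≠ 0 := by
        intro h0
        rw [hα, h0] at hone
        simp at hone
      have hconst : Tendsto (fun n => |lastEntry n|) atTop (nhds (|v (N - 1)|)) := by
        apply tendsto_const_nhds.congr'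
        filter_upwards [eventually_ge_atTop 1] with n hn
        rw [hlast' n hn, abs_mul, abs_mul, abs_pow, hone, one_pow, max_self,
            div_self (one_ne_zero), abs_one, one_mul, one_mul]
      have h2 : Tendsto (fun n => |lastEntry n|) atTop (nhds 0) := by
        simpa using h.abs
      exact hvN (abs_eq_zero.mp (tendsto_nhds_unique hconst h2))
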